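/- Assume the full Hypothesis (positive $\varrho$, real $\chi$ and $\varsigma$, $\mathrm{supp}(\varsigma)=(a,b)$, no common atoms, gap condition, $|\mathrm{supp}(\varrho)|>1$). If $f \in \mathfrak{D}_\tau$ satisfies $f = 0$ $\varrho$-almost everywhere and $\tau f = 0$ $\varrho$-almost everywhere, then $f$ vanishes identically on $(a,b)$. Consequently the map $f \mapsto (f, \tau f)$ from $\mathfrak{D}_\tau$ into $L^1_{loc}((a,b);\varrho) \times L^1_{loc}((a,b);\varrho)$ is injective. -/

import Mathlib

open MeasureTheory Set Filter Topology
open scoped ENNReal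

/-- The two-sided Lebesgue–Stieltjes integral `∫_c^x h dω`. -/
noncomputable def mInt (ω : Measure ℝ) (h : ℝ → ℂ) (c x : ℝ) : ℂ :=
  if c ≤ x then ∫ t in Set.Ico c x, h t ∂ω else -∫ t in Set.Ico x c, h t ∂ω

/-- Local integrability on compact subintervals of `(a,b)` with respect to `ω`. -/
def LocInt (a b : ℝ) (ω : Measure ℝ) (h : ℝ → ℂ) : Prop :=
  ∀ α ∈ Set.Ioo a b, ∀ β ∈ Set.Ioo a b, MeasureTheory.IntegrableOn h (Set.Ico α β) ω

/-- `(f, f1, fτ)` consists of a function `f` in the maximal domain `𝔇_τ` of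
`τ f = d/dϱ (-df/dς + ∫ f dχ)`, its quasi-derivative `f1 = df/dς` and `fτ = τ f`.
The locally finite complex Borel measures `ς`, `χ`, `ϱ` on `(a,b)` are represented
by their densities `σf`, `χf`, `ρf` with respect to the positive Borel measure `ω`. -/
def InDom (a b : ℝ) (ω : Measure ℝ) (σf χf ρf : ℝ → ℂ) (f f1 fτ : ℝ → ℂ) : Prop :=
  LocInt a b ω (fun t => f1 t * σf t) ∧
  LocInt a b ω (fun t => f t * χf t - fτ t * ρf t) ∧
  ∀ α ∈ Set.Ioo a b, ∀ β ∈ Set.Ioo a b, α ≤ β →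
    f β = f α + ∫ t in Set.Ico α β, f1 t * σf t ∂ω ∧
    f1 β = f1 α + ∫ t in Set.Ico α β, (f t * χf t - fτ t * ρf t) ∂ω

/-- `supp ς = (a,b)`: every nondegenerate compact subinterval carries `ς`-mass. -/
def SuppFull (a b : ℝ) (ω : Measure ℝ) (σf : ℝ → ℂ) : Prop :=
  ∀ α ∈ Set.Ioo a b, ∀ β ∈ Set.Ioo a b, α < β → ∫ t in Set.Ico α β, ‖σf t‖ ∂ω ≠ 0

/-- `ς` has no point masses in common with `ϱ` or `χ`:
`ς{x}·ϱ{x} = ς{x}·χ{x} = 0` for all `x ∈ (a,b)`. -/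
def NoCommonAtoms (a b : ℝ) (ω : Measure ℝ) (σf χf ρf : ℝ → ℂ) : Prop :=
  ∀ x ∈ Set.Ioo a b,
    ((ω {x}).toReal : ℂ) * σf x * (((ω {x}).toReal : ℂ) * ρf x) = 0 ∧
    ((ω {x}).toReal : ℂ) * σf x * (((ω {x}).toReal : ℂ) * χf x) = 0

/-- The measures `ς`, `χ` are real and `ϱ` is positive. -/
def RealCoeffs (σf χf ρf : ℝ → ℂ) : Prop :=
  (∀ t, (σf t).im = 0) ∧ (∀ t, (χf t).im = 0) ∧ (∀ t, (ρf t).im = 0 ∧ 0 ≤ (ρf t).re)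

/-- `x` belongs to the support of the measure `ϱ` (with density `ρf` w.r.t. `ω`). -/
def InSuppRho (a b : ℝ) (ω : Measure ℝ) (ρf : ℝ → ℂ) (x : ℝ) : Prop :=
  ∀ ε > 0, ¬ (∀ᵐ t ∂ω, (t ∈ Set.Ioo (x - ε) (x + ε) ∧ t ∈ Set.Ioo a b) → ρf t = 0)

/-- The gap condition: for each gap `(α,β)` of `supp ϱ` and every `f ∈ 𝔇_τ` with outer
limits `f(α-) = f(β+) = 0` one has `f ≡ 0` on `(α,β)`. -/
def GapCondition (a b : ℝ) (ω : Measure ℝ) (σf χf ρf : ℝ → ℂ) : Prop :=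
  ∀ α ∈ Set.Ioo a b, ∀ β ∈ Set.Ioo a b, α < β →
    (∀ᵐ t ∂ω, t ∈ Set.Ioo α β → ρf t = 0) →
    InSuppRho a b ω ρf α → InSuppRho a b ω ρf β →
    ∀ f f1 fτ : ℝ → ℂ, InDom a b ω σf χf ρf f f1 fτ →
      Filter.Tendsto f (nhdsWithin α (Set.Iio α)) (nhds 0) →
      Filter.Tendsto f (nhdsWithin β (Set.Ioi β)) (nhds 0) →
      ∀ x ∈ Set.Ioo α β, f x = 0

/-- `supp ϱ` contains at least two points. -/
def SuppRhoTwoPoints (a b : ℝ) (ω : Measure ℝ) (ρf : ℝ → ℂ) : Prop :=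
  ∃ x ∈ Set.Ioo a b, ∃ y ∈ Set.Ioo a b, x ≠ y ∧
    InSuppRho a b ω ρf x ∧ InSuppRho a b ω ρf y

/-- Under the full Hypothesis, if `f, g ∈ 𝔇_τ` satisfy `f = g` and `τ f = τ g`
`ϱ`-almost everywhere, then `f = g` everywhere on `(a,b)`; i.e. the map
`f ↦ (f, τ f)` into `L¹_loc(ϱ) × L¹_loc(ϱ)` is injective. -/

lemma infAtom_zero {ω : Measure ℝ} {g : ℝ → ℂ} {x : ℝ}
    (hg : IntegrableOn g {x} ω) (hx : ω {x} = ∞) : g x = 0 := by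
  have h1 : HasFiniteIntegral g (ω.restrict {x}) := hg.2
  rw [Measure.restrict_singleton, hx] at h1
  unfold HasFiniteIntegral at h1
  rw [lintegral_smul_measure, lintegral_dirac] at h1
  by_contra hne
  rw [smul_eq_mul, ENNReal.top_mul (by simpa using hne)] at h1
  exact lt_irrefl _ h1

lemma tendsto_setIntegral_shrink {ι : Type*} {l : Filter ι} [l.IsCountablyGenerated]
    {E : Type*} [NormedAddCommGroup E] [NormedSpace ℝ E]
    {ω : Measure ℝ} {g : ℝ → E} {A : Set ℝ} (hA : MeasurableSet A) (hg : IntegrableOn g A ω)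
    {S : ι → Set ℝ} (hmeas : ∀ i, MeasurableSet (S i)) (hsub : ∀ i, S i ⊆ A)
    {T : Set ℝ} (hT : MeasurableSet T) (hTA : T ⊆ A)
    (hconv : ∀ t, ∀ᶠ i in l, (t ∈ S i ↔ t ∈ T)) :
    Tendsto (fun i => ∫ t in S i, g t ∂ω) l (𝓝 (∫ t in T, g t ∂ω)) := by
  rw [tendsto_iff_seq_tendsto]
  intro u hu
  have key : ∀ (B : Set ℝ), MeasurableSet B →
      ∫ t in B, g t ∂ω = ∫ t, (B.indicator g) t ∂ω := fun B hB => (integral_indicator hB).symm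
  have hae : AEStronglyMeasurable g (ω.restrict A) := hg.1
  have hindic : ∀ (B : Set ℝ), MeasurableSet B → B ⊆ A →
      AEStronglyMeasurable (B.indicator g) ω := by
    intro B hB hBA
    rw [aestronglyMeasurable_indicator_iff hB]
    exact hae.mono_measure (Measure.restrict_mono hBA le_rfl)
  have hconv' : ∀ t, ∀ᶠ n in atTop, ((S (u n)).indicator g t = T.indicator g t) := by
    intro t
    filter_upwards [hu.eventually (hconv t)] with n hn
    by_cases htT : t ∈ T
    · rw [indicator_of_mem htT, indicator_of_mem (hn.2 htT)]
    · rw [indicator_of_notMem htT, indicator_of_notMem (fun h => htT (hn.1 h))]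
  have main := tendsto_integral_of_dominated_convergence (μ := ω)
    (F := fun n => (S (u n)).indicator g) (f := T.indicator g)
    (bound := A.indicator (fun t => ‖g t‖))
    (fun n => hindic _ (hmeas (u n)) (hsub (u n)))
    (by rw [integrable_indicator_iff hA]; exact hg.norm)
    (fun n => .of_forall (fun t => by
      show ‖(S (u n)).indicator g t‖ ≤ A.indicator (fun t => ‖g t‖) t
      by_cases ht : t ∈ S (u n)
      · rw [indicator_of_mem ht, indicator_of_mem (hsub (u n) ht)]
      · rw [indicator_of_notMem ht]
        simp only [norm_zero]
        exact indicator_nonneg (fun t _ => norm_nonneg _) t))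
    (.of_forall (fun t => tendsto_const_nhds.congr'
      ((hconv' t).mono (fun n hn => hn.symm))))
  rw [key T hT]
  exact main.congr (fun n => (key _ (hmeas _)).symm)

section wrappers
variable {E : Type*} [NormedAddCommGroup E] [NormedSpace ℝ E] {ω : Measure ℝ} {g : ℝ → E}

lemma tendsto_Ico_right {c d : ℝ} (hcd : c < d) (hg : IntegrableOn g (Ico c d) ω) :
    Tendsto (fun s => ∫ t in Ico c s, g t ∂ω) (𝓝[>] c) (𝓝 (∫ t in {c}, g t ∂ω)) := by
  have core := tendsto_setIntegral_shrink (l := 𝓝[>] c) measurableSet_Ico hg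
    (S := fun s => Ico c (min s d)) (fun s => measurableSet_Ico)
    (fun s => Ico_subset_Ico le_rfl (min_le_right _ _))
    (measurableSet_singleton c) (by simpa using hcd) (fun t => ?_)
  · refine core.congr' ?_
    filter_upwards [Ioo_mem_nhdsGT_of_mem (left_mem_Ico.2 hcd)] with s hs
    rw [min_eq_left hs.2.le]
  · rcases lt_trichotomy t c with htc | rfl | htc
    · exact .of_forall (fun s => by simp [mem_Ico, htc.not_ge, htc.ne])
    · filter_upwards [self_mem_nhdsWithin] with s hs
      simp [mem_Ico, lt_min hs hcd]
    · filter_upwards [Ioo_mem_nhdsGT_of_mem (left_mem_Ico.2 htc)] with s hs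
      have : ¬ t < min s d := by
        simp only [lt_min_iff, not_and_or, not_lt]
        exact Or.inl hs.2.le
      simp [mem_Ico, this, htc.ne']

lemma tendsto_Ioo_right {c d : ℝ} (hcd : c < d) (hg : IntegrableOn g (Ico c d) ω) :
    Tendsto (fun s => ∫ t in Ioo c s, g t ∂ω) (𝓝[>] c) (𝓝 0) := by
  have core := tendsto_setIntegral_shrink (l := 𝓝[>] c) measurableSet_Ico hg
    (S := fun s => Ioo c (min s d)) (fun s => measurableSet_Ioo)
    (fun s => Ioo_subset_Ico_self.trans (Ico_subset_Ico le_rfl (min_le_right _ _)))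
    (MeasurableSet.empty) (empty_subset _) (fun t => ?_)
  · have h0 : (∫ t in (∅ : Set ℝ), g t ∂ω) = 0 := by simp
    rw [h0] at core
    refine core.congr' ?_
    filter_upwards [Ioo_mem_nhdsGT_of_mem (left_mem_Ico.2 hcd)] with s hs
    rw [min_eq_left hs.2.le]
  · rcases le_or_gt t c with htc | htc
    · exact .of_forall (fun s => by simp [mem_Ioo, htc.not_gt])
    · filter_upwards [Ioo_mem_nhdsGT_of_mem (left_mem_Ico.2 htc)] with s hs
      have : ¬ t < min s d := by
        simp only [lt_min_iff, not_and_or, not_lt]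
        exact Or.inl hs.2.le
      simp [mem_Ioo, this]

lemma tendsto_Ico_left {e c : ℝ} (hec : e < c) (hg : IntegrableOn g (Ico e c) ω) :
    Tendsto (fun s => ∫ t in Ico s c, g t ∂ω) (𝓝[<] c) (𝓝 0) := by
  have core := tendsto_setIntegral_shrink (l := 𝓝[<] c) measurableSet_Ico hg
    (S := fun s => Ico (max s e) c) (fun s => measurableSet_Ico)
    (fun s => Ico_subset_Ico (le_max_right _ _) le_rfl)
    (MeasurableSet.empty) (empty_subset _) (fun t => ?_)
  · have h0 : (∫ t in (∅ : Set ℝ), g t ∂ω) = 0 := by simp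
    rw [h0] at core
    refine core.congr' ?_
    filter_upwards [Ioo_mem_nhdsLT_of_mem (right_mem_Ioc.2 hec)] with s hs
    rw [max_eq_left hs.1.le]
  · rcases lt_or_ge t c with htc | htc
    · filter_upwards [Ioo_mem_nhdsLT_of_mem (right_mem_Ioc.2 htc)] with s hs
      have : ¬ max s e ≤ t := by
        simp only [max_le_iff, not_and_or, not_le]
        exact Or.inl hs.1
      simp [mem_Ico, this]
    · exact .of_forall (fun s => by simp [mem_Ico, htc.not_gt])

end wrappers

-- if a real integrable function has zero integral then pos/neg lintegrals agree
lemma posneg_lintegral {ν : Measure ℝ} {f : ℝ → ℝ} (hf : Integrable f ν)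
    (h0 : ∫ t, f t ∂ν = 0) :
    ∫⁻ t, ENNReal.ofReal (f t) ∂ν = ∫⁻ t, ENNReal.ofReal (-f t) ∂ν := by
  have hfin1 : ∫⁻ t, ENNReal.ofReal (f t) ∂ν < ∞ := by
    calc ∫⁻ t, ENNReal.ofReal (f t) ∂ν ≤ ∫⁻ t, (‖f t‖₊ : ℝ≥0∞) ∂ν :=
      lintegral_mono (fun t => Real.ofReal_le_enorm _)
    _ < ∞ := hf.2
  have hfin2 : ∫⁻ t, ENNReal.ofReal (-f t) ∂ν < ∞ := by
    calc ∫⁻ t, ENNReal.ofReal (-f t) ∂ν ≤ ∫⁻ t, (‖f t‖₊ : ℝ≥0∞) ∂ν :=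
      lintegral_mono (fun t => by rw [← nnnorm_neg]; exact Real.ofReal_le_enorm _)
    _ < ∞ := hf.2
  have := integral_eq_lintegral_pos_part_sub_lintegral_neg_part hf
  rw [h0] at this
  have hre : (∫⁻ t, ENNReal.ofReal (f t) ∂ν).toReal = (∫⁻ t, ENNReal.ofReal (-f t) ∂ν).toReal := by
    linarith
  exact (ENNReal.toReal_eq_toReal_iff' hfin1.ne hfin2.ne).1 hre

lemma sigma_lemma {a b : ℝ} {ω : Measure ℝ} {σf : ℝ → ℂ}
    (hσ : LocInt a b ω σf) (hreal : ∀ t, (σf t).im = 0) (hsupp : SuppFull a b ω σf)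
    {s₀ s₁ : ℝ} (h0 : s₀ ∈ Ioo a b) (h1 : s₁ ∈ Ioo a b) (h01 : s₀ < s₁)
    (H : ∀ s s', s₀ ≤ s → s < s' → s' ≤ s₁ → ∫ t in Ico s s', σf t ∂ω = 0) : False := by
  set I := Ico s₀ s₁ with hI
  have hInt : IntegrableOn σf I ω := hσ _ h0 _ h1
  set φ : ℝ → ℝ := fun t => (σf t).re with hφ
  have hφInt : IntegrableOn φ I ω := by
    have := hInt.re
    simp at this; exact this
  have hφIntOn : ∀ s s', s₀ ≤ s → s < s' → s' ≤ s₁ → IntegrableOn φ (Ico s s') ω :=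
    fun s s' hs hss' hs' => hφInt.mono_set (Ico_subset_Ico hs hs')
  have HRe : ∀ s s', s₀ ≤ s → s < s' → s' ≤ s₁ → ∫ t in Ico s s', φ t ∂ω = 0 := by
    intro s s' hs hss' hs'
    have hint' : IntegrableOn σf (Ico s s') ω := hInt.mono_set (Ico_subset_Ico hs hs')
    have := integral_re hint'
    rw [H s s' hs hss' hs'] at this
    simpa using this
  -- measurable representative
  have hmeas0 : AEStronglyMeasurable φ (ω.restrict I) := hφInt.1
  set ψ : ℝ → ℝ := hmeas0.mk φ with hψdef
  have hψmeas : Measurable ψ := hmeas0.stronglyMeasurable_mk.measurable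
  have heq : φ =ᵐ[ω.restrict I] ψ := hmeas0.ae_eq_mk
  have hψInt : IntegrableOn ψ I ω := hφInt.congr heq
  set μ₁ : Measure ℝ := (ω.restrict I).withDensity (fun t => ENNReal.ofReal (ψ t)) with hμ₁
  set μ₂ : Measure ℝ := (ω.restrict I).withDensity (fun t => ENNReal.ofReal (-ψ t)) with hμ₂
  have hψm1 : Measurable (fun t => ENNReal.ofReal (ψ t)) := hψmeas.ennreal_ofReal
  have hψm2 : Measurable (fun t => ENNReal.ofReal (-ψ t)) := hψmeas.neg.ennreal_ofReal
  have hfin1 : μ₁ univ ≠ ∞ := by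
    rw [hμ₁, withDensity_apply _ MeasurableSet.univ, Measure.restrict_univ]
    exact ne_of_lt (lt_of_le_of_lt (lintegral_mono (fun t => Real.ofReal_le_enorm _)) hψInt.2)
  have hfin2 : μ₂ univ ≠ ∞ := by
    rw [hμ₂, withDensity_apply _ MeasurableSet.univ, Measure.restrict_univ]
    exact ne_of_lt (lt_of_le_of_lt (lintegral_mono (fun t =>
      le_of_le_of_eq (Real.ofReal_le_enorm (-ψ t)) (by rw [enorm_neg]))) hψInt.2)
  haveI : IsFiniteMeasure μ₁ := ⟨lt_top_iff_ne_top.2 hfin1⟩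
  haveI : IsFiniteMeasure μ₂ := ⟨lt_top_iff_ne_top.2 hfin2⟩
  have hagree : ∀ ⦃u v : ℝ⦄, u < v → μ₁ (Ico u v) = μ₂ (Ico u v) := by
    intro u v huv
    rw [hμ₁, hμ₂, withDensity_apply _ measurableSet_Ico, withDensity_apply _ measurableSet_Ico,
      Measure.restrict_restrict measurableSet_Ico, hI, Ico_inter_Ico]
    set M := max u s₀ with hM
    set N := min v s₁ with hN
    by_cases hMN : M < N
    · have hsub : Ico M N ⊆ I := by
        rw [hI, hM, hN]; exact Ico_subset_Ico (le_max_right _ _) (min_le_right _ _)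
      have heq2 : φ =ᵐ[ω.restrict (Ico M N)] ψ :=
        ae_restrict_of_ae_restrict_of_subset hsub heq
      have hψint2 : Integrable ψ (ω.restrict (Ico M N)) :=
        (hφIntOn M N (le_max_right _ _) hMN (min_le_right _ _)).congr heq2
      have hz : ∫ t, ψ t ∂(ω.restrict (Ico M N)) = 0 := by
        rw [← integral_congr_ae heq2]
        exact HRe M N (le_max_right _ _) hMN (min_le_right _ _)
      exact posneg_lintegral hψint2 hz
    · rw [Ico_eq_empty hMN, Measure.restrict_empty]
      simp
  have huniv : μ₁ univ = μ₂ univ := by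
    rw [hμ₁, hμ₂, withDensity_apply _ MeasurableSet.univ, withDensity_apply _ MeasurableSet.univ,
      Measure.restrict_univ]
    have hz : ∫ t, ψ t ∂(ω.restrict I) = 0 := by
      rw [← integral_congr_ae heq]
      exact HRe s₀ s₁ le_rfl h01 le_rfl
    exact posneg_lintegral hψInt hz
  have hext : μ₁ = μ₂ := Measure.ext_of_Ico_finite μ₁ μ₂ huniv hagree
  have keynull : ∀ (A : Set ℝ), MeasurableSet A → μ₁ A = 0 →
      (∀ t ∈ A, ENNReal.ofReal (ψ t) ≠ 0) → (ω.restrict I) A = 0 := by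
    intro A hAmeas h1' hApos
    rw [hμ₁, withDensity_apply _ hAmeas] at h1'
    have hz := (lintegral_eq_zero_iff hψm1).1 h1'
    have hz' := ae_iff.1 hz
    simp only [Pi.zero_apply] at hz'
    have hsub2 : A ⊆ {t | ¬ (ENNReal.ofReal (ψ t) = 0)} := fun t ht => hApos t ht
    have : ((ω.restrict I).restrict A) A = 0 := measure_mono_null hsub2 hz'
    rwa [Measure.restrict_apply hAmeas, inter_self] at this
  have hnullA : (ω.restrict I) {t | 0 < ψ t} = 0 := by
    have hAmeas : MeasurableSet {t | 0 < ψ t} := measurableSet_lt measurable_const hψmeas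
    refine keynull _ hAmeas ?_ (fun t ht => (ENNReal.ofReal_pos.2 ht).ne')
    rw [hext, hμ₂, withDensity_apply _ hAmeas]
    rw [setLIntegral_congr_fun hAmeas (fun t (ht : 0 < ψ t) =>
      ENNReal.ofReal_eq_zero.2 (by linarith : -ψ t ≤ 0))]
    simp
  have hnullB : (ω.restrict I) {t | 0 < -ψ t} = 0 := by
    have hBmeas2 : MeasurableSet {t | 0 < -ψ t} := measurableSet_lt measurable_const hψmeas.neg
    -- adapt keynull for μ₂
    have h2' : μ₂ {t | 0 < -ψ t} = 0 := by
      rw [← hext, hμ₁, withDensity_apply _ hBmeas2]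
      rw [setLIntegral_congr_fun hBmeas2 (fun t (ht : 0 < -ψ t) =>
        ENNReal.ofReal_eq_zero.2 (by linarith : ψ t ≤ 0))]
      simp
    rw [hμ₂, withDensity_apply _ hBmeas2] at h2'
    have hz := (lintegral_eq_zero_iff hψm2).1 h2'
    have hz' := ae_iff.1 hz
    simp only [Pi.zero_apply] at hz'
    have hsub2 : {t | 0 < -ψ t} ⊆ {t | ¬ (ENNReal.ofReal (-ψ t) = 0)} := fun t ht =>
      (ENNReal.ofReal_pos.2 ht).ne'
    have : ((ω.restrict I).restrict {t | 0 < -ψ t}) {t | 0 < -ψ t} = 0 :=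
      measure_mono_null hsub2 hz'
    rwa [Measure.restrict_apply hBmeas2, inter_self] at this
  have hψ0 : ψ =ᵐ[ω.restrict I] 0 := by
    rw [Filter.EventuallyEq, ae_iff]
    refine measure_mono_null (fun t ht => ?_) (measure_union_null hnullA hnullB)
    simp only [Pi.zero_apply, mem_setOf_eq] at ht ⊢
    rcases lt_or_gt_of_ne ht with h | h
    · right; simpa [neg_pos] using h
    · left; exact h
  have hφ0 : φ =ᵐ[ω.restrict I] 0 := heq.trans hψ0
  have hnorm0 : (fun t => ‖σf t‖) =ᵐ[ω.restrict I] 0 := by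
    refine hφ0.mono (fun t ht => ?_)
    simp only [Pi.zero_apply] at ht ⊢
    have hcast : σf t = ((φ t : ℝ) : ℂ) := Complex.ext (by simp [hφ]) (by simp [hreal t])
    rw [hcast, ht]
    simp
  have : ∫ t in I, ‖σf t‖ ∂ω = 0 := integral_eq_zero_of_ae hnorm0
  exact hsupp s₀ h0 s₁ h1 h01 this


lemma master (a b : ℝ) (hab : a < b) (ω : Measure ℝ) (σf χf ρf : ℝ → ℂ)
    (hσ : LocInt a b ω σf) (hχ : LocInt a b ω χf)
    (hrealσ : ∀ t, (σf t).im = 0)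
    (hsupp : SuppFull a b ω σf)
    (hatoms : NoCommonAtoms a b ω σf χf ρf)
    (hgapcond : GapCondition a b ω σf χf ρf)
    (htwo : SuppRhoTwoPoints a b ω ρf)
    (h h1 : ℝ → ℂ)
    (hdom : InDom a b ω σf χf ρf h h1 (fun _ => 0))
    (hae : ∀ᵐ t ∂ω, t ∈ Set.Ioo a b → (ρf t = 0 ∨ h t = 0)) :
    ∀ x ∈ Set.Ioo a b, h x = 0 := by
  classical
  -- notation
  set p : ℝ → ℂ := fun t => h1 t * σf t with hp
  set q : ℝ → ℂ := fun t => h t * χf t with hq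
  have hIoo : ∀ {α β : ℝ}, α ∈ Ioo a b → β ∈ Ioo a b → Ico α β ⊆ Ioo a b := fun hα hβ t ht =>
    ⟨lt_of_lt_of_le hα.1 ht.1, lt_trans ht.2 hβ.2⟩
  have hdomp : ∀ α ∈ Ioo a b, ∀ β ∈ Ioo a b, IntegrableOn p (Ico α β) ω := hdom.1
  have hdomq : ∀ α ∈ Ioo a b, ∀ β ∈ Ioo a b, IntegrableOn q (Ico α β) ω := by
    intro α hα β hβ
    have := hdom.2.1 α hα β hβ
    refine this.congr (ae_of_all _ (fun t => by simp [hq]))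
  have eq1 : ∀ {α β : ℝ}, α ∈ Ioo a b → β ∈ Ioo a b → α ≤ β →
      h β = h α + ∫ t in Ico α β, p t ∂ω := by
    intro α β hα hβ hle
    exact (hdom.2.2 _ hα _ hβ hle).1
  have eq2 : ∀ {α β : ℝ}, α ∈ Ioo a b → β ∈ Ioo a b → α ≤ β →
      h1 β = h1 α + ∫ t in Ico α β, q t ∂ω := by
    intro α β hα hβ hle
    have := (hdom.2.2 _ hα _ hβ hle).2
    rwa [integral_congr_ae (ae_of_all _ (fun t => by simp [hq] : ∀ t,
      h t * χf t - (fun _ => (0:ℂ)) t * ρf t = q t))] at this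
  have left_aux : ∀ {x : ℝ}, x ∈ Ioo a b → ∃ e ∈ Ioo a b, e < x := by
    intro x hx
    have hl : max a (x-1) < x := max_lt hx.1 (by linarith)
    exact ⟨(max a (x-1) + x)/2, ⟨by linarith [le_max_left a (x-1), hx.1],
      by linarith [hx.2]⟩, by linarith⟩
  have right_aux : ∀ {x : ℝ}, x ∈ Ioo a b → ∃ d ∈ Ioo a b, x < d := by
    intro x hx
    exact ⟨(x + b)/2, ⟨by linarith [hx.1, hx.2], by linarith [hx.2]⟩, by linarith [hx.2]⟩
  -- limits of partial integrals
  have leftlimp : ∀ {x : ℝ}, x ∈ Ioo a b →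
      Tendsto (fun s => ∫ t in Ico s x, p t ∂ω) (𝓝[<] x) (𝓝 0) := by
    intro x hx
    obtain ⟨e, he, hex⟩ := left_aux hx
    exact tendsto_Ico_left hex (hdomp _ he _ hx)
  have leftlimq : ∀ {x : ℝ}, x ∈ Ioo a b →
      Tendsto (fun s => ∫ t in Ico s x, q t ∂ω) (𝓝[<] x) (𝓝 0) := by
    intro x hx
    obtain ⟨e, he, hex⟩ := left_aux hx
    exact tendsto_Ico_left hex (hdomq _ he _ hx)
  have rightlimp : ∀ {x : ℝ}, x ∈ Ioo a b →
      Tendsto (fun s => ∫ t in Ico x s, p t ∂ω) (𝓝[>] x) (𝓝 (∫ t in {x}, p t ∂ω)) := by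
    intro x hx
    obtain ⟨d, hd, hxd⟩ := right_aux hx
    exact tendsto_Ico_right hxd (hdomp _ hx _ hd)
  have rightlimq : ∀ {x : ℝ}, x ∈ Ioo a b →
      Tendsto (fun s => ∫ t in Ico x s, q t ∂ω) (𝓝[>] x) (𝓝 (∫ t in {x}, q t ∂ω)) := by
    intro x hx
    obtain ⟨d, hd, hxd⟩ := right_aux hx
    exact tendsto_Ico_right hxd (hdomq _ hx _ hd)
  -- from a non-null set of support points, get a point where h vanishes
  have exists_good : ∀ (W : Set ℝ), W ⊆ Ioo a b → (¬ ∀ᵐ t ∂ω, t ∈ W → ρf t = 0) →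
      ∃ t ∈ W, h t = 0 := by
    intro W hW hmass
    by_contra hc
    push_neg at hc
    exact hmass (hae.mono (fun t ht htW => by
      by_contra hρt
      exact hc t htW ((ht (hW htW)).resolve_left hρt)))
  -- at an atom of ϱ, h vanishes
  have atom_h0 : ∀ {x : ℝ}, x ∈ Ioo a b → ω {x} ≠ 0 → ρf x ≠ 0 → h x = 0 := by
    intro x hx hω hρx
    by_contra hc
    have hsub : {x} ⊆ {t | ¬ (t ∈ Ioo a b → (ρf t = 0 ∨ h t = 0))} := by
      intro t ht
      rw [mem_singleton_iff] at ht
      subst ht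
      simp only [mem_setOf_eq]
      intro hcon
      rcases hcon hx with h' | h'
      exacts [hρx h', hc h']
    exact hω (measure_mono_null hsub (ae_iff.1 hae))
  -- Step 5 : mass accumulating from the left forces h x = 0
  have left_zero : ∀ {x : ℝ}, x ∈ Ioo a b →
      (∀ ε > 0, ¬ ∀ᵐ t ∂ω, t ∈ Ioc (x-ε) x ∩ Ioo a b → ρf t = 0) → h x = 0 := by
    intro x hx hmass
    by_contra hne
    have hδ : 0 < ‖h x‖ := norm_pos_iff.2 hne
    have hev : ∀ᶠ s in 𝓝[<] x, ‖∫ t in Ico s x, p t ∂ω‖ < ‖h x‖ := by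
      have := Metric.tendsto_nhds.1 (leftlimp hx) _ hδ
      exact this.mono (fun s hs => by rwa [dist_zero_right] at hs)
    rw [eventually_nhdsWithin_iff] at hev
    obtain ⟨ε₀, hε₀pos, hball⟩ := Metric.eventually_nhds_iff.1 hev
    obtain ⟨t, htW, hht⟩ := exists_good (Ioc (x - ε₀/2) x ∩ Ioo a b) inter_subset_right
      (hmass (ε₀/2) (by linarith))
    rcases eq_or_lt_of_le htW.1.2 with rfl | htx
    · exact hne hht
    · have hdist : dist t x < ε₀ := by
        rw [Real.dist_eq, abs_of_nonpos (by linarith)]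
        have := htW.1.1
        linarith
      have hP := hball hdist htx
      have heq' := eq1 htW.2 hx (le_of_lt htx)
      rw [hht, zero_add] at heq'
      rw [← heq'] at hP
      exact lt_irrefl _ hP
  -- Step 6 : mass accumulating from the right forces the right limit of h to vanish
  have right_zero : ∀ {x : ℝ}, x ∈ Ioo a b →
      (∀ ε > 0, ¬ ∀ᵐ t ∂ω, t ∈ Ico x (x+ε) ∩ Ioo a b → ρf t = 0) →
      h x + ∫ t in {x}, p t ∂ω = 0 := by
    intro x hx hmass
    by_cases hatomx : ω {x} ≠ 0 ∧ ρf x ≠ 0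
    · have hx0 : h x = 0 := atom_h0 hx hatomx.1 hatomx.2
      have hjmp : ∫ t in {x}, p t ∂ω = 0 := by
        rcases eq_or_ne (ω {x}) ∞ with hinf | hfin
        · obtain ⟨d, hd, hxd⟩ := right_aux hx
          have hp0 : p x = 0 := infAtom_zero ((hdomp _ hx _ hd).mono_set
            (singleton_subset_iff.2 (left_mem_Ico.2 hxd))) hinf
          rw [integral_singleton, hp0, smul_zero]
        · have hm : (ω {x}).toReal ≠ 0 := ENNReal.toReal_ne_zero.2 ⟨hatomx.1, hfin⟩
          have hmc : (((ω {x}).toReal : ℝ) : ℂ) ≠ 0 := Complex.ofReal_ne_zero.2 hm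
          have hσ0 : σf x = 0 := by
            have hcma := (hatoms x hx).1
            rcases mul_eq_zero.1 hcma with h' | h'
            · rcases mul_eq_zero.1 h' with h'' | h''
              exacts [absurd h'' hmc, h'']
            · rcases mul_eq_zero.1 h' with h'' | h''
              exacts [absurd h'' hmc, absurd h'' hatomx.2]
          rw [integral_singleton]
          simp [hp, hσ0]
      rw [hx0, hjmp, add_zero]
    · have hmass' : ∀ ε > 0, ¬ ∀ᵐ t ∂ω, t ∈ Ioo x (x+ε) ∩ Ioo a b → ρf t = 0 := by
        intro ε hε hcon
        refine hmass ε hε ?_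
        rcases not_and_or.1 hatomx with hω0 | hρ0
        · push_neg at hω0
          have hxnull : ∀ᵐ t ∂ω, t ∉ ({x} : Set ℝ) := measure_eq_zero_iff_ae_notMem.1 hω0
          filter_upwards [hcon, hxnull] with t h1t h2t ht
          have htne : t ≠ x := fun hteq => h2t (by rw [hteq]; exact rfl)
          exact h1t ⟨⟨lt_of_le_of_ne ht.1.1 (Ne.symm htne), ht.1.2⟩, ht.2⟩
        · push_neg at hρ0
          filter_upwards [hcon] with t h1t ht
          rcases eq_or_lt_of_le ht.1.1 with rfl | hlt
          · exact hρ0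
          · exact h1t ⟨⟨hlt, ht.1.2⟩, ht.2⟩
      by_contra hL
      have hδ : 0 < ‖h x + ∫ t in {x}, p t ∂ω‖ := norm_pos_iff.2 hL
      have hev : ∀ᶠ s in 𝓝[>] x, ‖(∫ t in Ico x s, p t ∂ω) - ∫ t in {x}, p t ∂ω‖
          < ‖h x + ∫ t in {x}, p t ∂ω‖ := by
        have := Metric.tendsto_nhds.1 (rightlimp hx) _ hδ
        exact this.mono (fun s hs => by rwa [dist_eq_norm] at hs)
      rw [eventually_nhdsWithin_iff] at hev
      obtain ⟨ε₀, hε₀pos, hball⟩ := Metric.eventually_nhds_iff.1 hev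
      obtain ⟨t, htW, hht⟩ := exists_good (Ioo x (x + ε₀/2) ∩ Ioo a b) inter_subset_right
        (hmass' (ε₀/2) (by linarith))
      have hdist : dist t x < ε₀ := by
        rw [Real.dist_eq, abs_of_nonneg (by linarith [htW.1.1])]
        linarith [htW.1.2]
      have hP := hball hdist htW.1.1
      have heq' := eq1 hx htW.2 (le_of_lt htW.1.1)
      rw [hht] at heq'
      have h2 : ∫ u in Ico x t, p u ∂ω = - h x := by linear_combination -heq'
      rw [h2] at hP
      have h3 : -h x - ∫ u in {x}, p u ∂ω = -(h x + ∫ u in {x}, p u ∂ω) := by ring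
      rw [h3, norm_neg] at hP
      exact lt_irrefl _ hP
  -- gap endpoints
  have gap_left : ∀ {α β : ℝ}, α ∈ Ioo a b → β ∈ Ioo a b → α < β →
      (∀ᵐ t ∂ω, t ∈ Ioo α β → ρf t = 0) → InSuppRho a b ω ρf α → h α = 0 := by
    intro α β hα hβ hαβ hfree hsα
    refine left_zero hα (fun ε hε hcon => ?_)
    have hε' : 0 < min ε (β - α) := lt_min hε (by linarith)
    refine hsα (min ε (β - α)) hε' ?_
    filter_upwards [hfree, hcon] with t h1t h2t
    rintro ⟨htI, htab⟩
    rcases le_or_gt t α with hle | hlt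
    · exact h2t ⟨⟨lt_of_le_of_lt (sub_le_sub_left (min_le_left _ _) α) htI.1, hle⟩, htab⟩
    · exact h1t ⟨hlt, by have := htI.2; have := min_le_right ε (β - α); linarith⟩
  have gap_right : ∀ {α β : ℝ}, α ∈ Ioo a b → β ∈ Ioo a b → α < β →
      (∀ᵐ t ∂ω, t ∈ Ioo α β → ρf t = 0) → InSuppRho a b ω ρf β →
      h β + ∫ t in {β}, p t ∂ω = 0 := by
    intro α β hα hβ hαβ hfree hsβ
    refine right_zero hβ (fun ε hε hcon => ?_)
    have hε' : 0 < min ε (β - α) := lt_min hε (by linarith)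
    refine hsβ (min ε (β - α)) hε' ?_
    filter_upwards [hfree, hcon] with t h1t h2t
    rintro ⟨htI, htab⟩
    rcases le_or_gt β t with hge | hlt
    · exact h2t ⟨⟨hge, lt_of_lt_of_le htI.2 (add_le_add le_rfl (min_le_left _ _))⟩, htab⟩
    · exact h1t ⟨by have := htI.1; have := min_le_right ε (β - α); linarith, hlt⟩
  -- Step 9 : on a gap of supp ϱ between two support points, h vanishes
  have gap_zero : ∀ {α β : ℝ}, α ∈ Ioo a b → β ∈ Ioo a b → α < β →
      (∀ᵐ t ∂ω, t ∈ Ioo α β → ρf t = 0) → InSuppRho a b ω ρf α → InSuppRho a b ω ρf β →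
      ∀ z ∈ Ioo α β, h z = 0 := by
    intro α β hα hβ hαβ hfree hsα hsβ
    have hα0 : h α = 0 := gap_left hα hβ hαβ hfree hsα
    have hβ0 : h β + ∫ t in {β}, p t ∂ω = 0 := gap_right hα hβ hαβ hfree hsβ
    have tleft : Tendsto h (𝓝[<] α) (𝓝 0) := by
      obtain ⟨e, he, heα⟩ := left_aux hα
      have hev : ∀ᶠ s in 𝓝[<] α, h α - ∫ t in Ico s α, p t ∂ω = h s := by
        filter_upwards [Ioo_mem_nhdsLT_of_mem (right_mem_Ioc.2 heα)] with s hs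
        have := eq1 (show s ∈ Ioo a b from ⟨lt_trans he.1 hs.1, lt_trans hs.2 hα.2⟩) hα hs.2.le
        linear_combination this
      have hT : Tendsto (fun s => h α - ∫ t in Ico s α, p t ∂ω) (𝓝[<] α) (𝓝 (h α - 0)) :=
        tendsto_const_nhds.sub (leftlimp hα)
      rw [show h α - 0 = 0 from by rw [hα0, sub_zero]] at hT
      exact Tendsto.congr' hev hT
    have tright : Tendsto h (𝓝[>] β) (𝓝 0) := by
      obtain ⟨d, hd, hβd⟩ := right_aux hβ
      have hev : ∀ᶠ s in 𝓝[>] β, h β + ∫ t in Ico β s, p t ∂ω = h s := by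
        filter_upwards [Ioo_mem_nhdsGT_of_mem (left_mem_Ico.2 hβd)] with s hs
        exact (eq1 hβ ⟨lt_trans hβ.1 hs.1, lt_trans hs.2 hd.2⟩ hs.1.le).symm
      have hT : Tendsto (fun s => h β + ∫ t in Ico β s, p t ∂ω) (𝓝[>] β)
          (𝓝 (h β + ∫ t in {β}, p t ∂ω)) := tendsto_const_nhds.add (rightlimp hβ)
      rw [hβ0] at hT
      exact Tendsto.congr' hev hT
    exact hgapcond α hα β hβ hαβ hfree hsα hsβ h h1 (fun _ => 0) hdom tleft tright
  -- Step 9' : a nontrivial interval where h vanishes yields a seed point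
  have seed_from_interval : ∀ {u v : ℝ}, u ∈ Ioo a b → v ∈ Ioo a b → u < v →
      (∀ z ∈ Ioo u v, h z = 0) → ∃ c ∈ Ioo a b, h c = 0 ∧ h1 c = 0 := by
    intro u v hu hv huv hz
    set s₀ := u + (v - u)/4 with hs₀def
    set s₁ := v - (v - u)/4 with hs₁def
    have hus₀ : u < s₀ := by rw [hs₀def]; linarith
    have hs₀s₁ : s₀ < s₁ := by rw [hs₀def, hs₁def]; linarith
    have hs₁v : s₁ < v := by rw [hs₁def]; linarith
    have hs₀m : s₀ ∈ Ioo a b := ⟨lt_trans hu.1 hus₀, by linarith [hv.2]⟩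
    have hs₁m : s₁ ∈ Ioo a b := ⟨by linarith [hu.1], lt_trans hs₁v hv.2⟩
    have hmem : ∀ {s : ℝ}, s₀ ≤ s → s ≤ s₁ → s ∈ Ioo a b := fun hs hs' =>
      ⟨lt_of_lt_of_le hs₀m.1 hs, lt_of_le_of_lt hs' hs₁m.2⟩
    have hconst : ∀ s, s₀ ≤ s → s ≤ s₁ → h1 s = h1 s₀ := by
      intro s hs hs'
      have heq := eq2 hs₀m (hmem hs hs') hs
      have hzero : ∫ t in Ico s₀ s, q t ∂ω = 0 := by
        rw [setIntegral_congr_fun measurableSet_Ico (fun t ht => ?_), integral_zero]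
        show q t = 0
        have htuv : t ∈ Ioo u v := ⟨lt_of_lt_of_le hus₀ ht.1, by
          have := lt_of_lt_of_le ht.2 hs'
          linarith⟩
        simp [hq, hz t htuv]
      rw [hzero, add_zero] at heq
      exact heq
    by_cases hC : h1 s₀ = 0
    · exact ⟨s₀, hs₀m, hz s₀ ⟨hus₀, by linarith⟩, hC⟩
    · exfalso
      refine sigma_lemma hσ hrealσ hsupp hs₀m hs₁m hs₀s₁ (fun s s' hs hss' hs' => ?_)
      have hsm : s ∈ Ioo a b := hmem hs (by linarith)
      have hsm' : s' ∈ Ioo a b := hmem (by linarith) hs'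
      have h0 : h s' = h s := by
        rw [hz s' ⟨by linarith, by linarith⟩, hz s ⟨by linarith, by linarith⟩]
      have heqq := eq1 hsm hsm' (le_of_lt hss')
      rw [h0] at heqq
      have hint0 : ∫ t in Ico s s', p t ∂ω = 0 := (left_eq_add.1 heqq)
      have hcongr : ∫ t in Ico s s', p t ∂ω = h1 s₀ * ∫ t in Ico s s', σf t ∂ω := by
        rw [← integral_const_mul]
        refine setIntegral_congr_fun measurableSet_Ico (fun t ht => ?_)
        show p t = h1 s₀ * σf t
        rw [hp]
        simp only []
        rw [hconst t (le_trans hs ht.1) (le_of_lt (lt_of_lt_of_le ht.2 hs'))]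
      rw [hcongr] at hint0
      exact (mul_eq_zero.1 hint0).resolve_left hC
  -- Gronwall machinery
  set G : ℝ → ℝ := fun t => ‖p t‖ + ‖q t‖ with hGdef
  set K : ℝ → ℝ := fun t => ‖σf t‖ + ‖χf t‖ with hKdef
  have hGint : ∀ α ∈ Ioo a b, ∀ β ∈ Ioo a b, IntegrableOn G (Ico α β) ω := fun α hα β hβ =>
    (hdomp α hα β hβ).norm.add (hdomq α hα β hβ).norm
  have hKint : ∀ α ∈ Ioo a b, ∀ β ∈ Ioo a b, IntegrableOn K (Ico α β) ω := fun α hα β hβ =>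
    (hσ α hα β hβ).norm.add (hχ α hα β hβ).norm
  have hGnonneg : ∀ t, 0 ≤ G t := fun t => add_nonneg (norm_nonneg _) (norm_nonneg _)
  have hKnonneg : ∀ t, 0 ≤ K t := fun t => add_nonneg (norm_nonneg _) (norm_nonneg _)
  have hGle : ∀ (t : ℝ) (c : ℝ), ‖h t‖ + ‖h1 t‖ ≤ c → G t ≤ K t * c := by
    intro t c hc
    have e1 : G t = ‖h1 t‖ * ‖σf t‖ + ‖h t‖ * ‖χf t‖ := by
      rw [hGdef]; simp only [hp, hq, norm_mul]
    rw [e1, hKdef]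
    show ‖h1 t‖ * ‖σf t‖ + ‖h t‖ * ‖χf t‖ ≤ (‖σf t‖ + ‖χf t‖) * c
    have k1 : ‖h1 t‖ * ‖σf t‖ ≤ c * ‖σf t‖ :=
      mul_le_mul_of_nonneg_right (by linarith [norm_nonneg (h t)]) (norm_nonneg _)
    have k2 : ‖h t‖ * ‖χf t‖ ≤ c * ‖χf t‖ :=
      mul_le_mul_of_nonneg_right (by linarith [norm_nonneg (h1 t)]) (norm_nonneg _)
    nlinarith [k1, k2]
  -- forward uniqueness
  have fwd : ∀ c₀, c₀ ∈ Ioo a b → h c₀ = 0 → h1 c₀ = 0 → ∀ d, d ∈ Ioo a b → c₀ ≤ d →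
      ∀ s ∈ Icc c₀ d, h s = 0 ∧ h1 s = 0 := by
    intro c₀ hc₀m h0 h10 d hdm hcd
    obtain ⟨D, hD, hdD⟩ := right_aux hdm
    have hGD : IntegrableOn G (Ico c₀ D) ω := hGint _ hc₀m _ hD
    have hpD : IntegrableOn p (Ico c₀ D) ω := hdomp _ hc₀m _ hD
    have hqD : IntegrableOn q (Ico c₀ D) ω := hdomq _ hc₀m _ hD
    set M : ℝ := ∫ t in Ico c₀ D, G t ∂ω with hM
    have hMnonneg : 0 ≤ M := setIntegral_nonneg measurableSet_Ico (fun t _ => hGnonneg t)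
    set T : Set ℝ := {t | t ∈ Icc c₀ d ∧ ∀ s ∈ Icc c₀ t, h s = 0 ∧ h1 s = 0} with hT
    have hc₀T : c₀ ∈ T := ⟨⟨le_rfl, hcd⟩, fun s hs => by
      have hsc : s = c₀ := le_antisymm hs.2 hs.1
      rw [hsc]; exact ⟨h0, h10⟩⟩
    have hTne : T.Nonempty := ⟨c₀, hc₀T⟩
    have hTbdd : BddAbove T := ⟨d, fun t ht => ht.1.2⟩
    set t₀ := sSup T with ht₀
    have ht₀mem : t₀ ∈ Icc c₀ d := ⟨le_csSup hTbdd hc₀T, csSup_le hTne (fun t ht => ht.1.2)⟩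
    have hmemIoo : ∀ {s : ℝ}, c₀ ≤ s → s ≤ d → s ∈ Ioo a b := fun hs hs' =>
      ⟨lt_of_lt_of_le hc₀m.1 hs, lt_of_le_of_lt hs' hdm.2⟩
    have ht₀Ioo : t₀ ∈ Ioo a b := hmemIoo ht₀mem.1 ht₀mem.2
    have hzero_lt : ∀ s, c₀ ≤ s → s < t₀ → h s = 0 ∧ h1 s = 0 := by
      intro s hs hst
      obtain ⟨t, htT, hts⟩ := exists_lt_of_lt_csSup hTne hst
      exact htT.2 s ⟨hs, hts.le⟩
    have ht₀zero : h t₀ = 0 ∧ h1 t₀ = 0 := by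
      rcases eq_or_lt_of_le ht₀mem.1 with heqc | hlt
      · rw [← heqc]; exact ⟨h0, h10⟩
      · constructor
        · have hev : ∀ᶠ s in 𝓝[<] t₀, ∫ t in Ico s t₀, p t ∂ω = h t₀ := by
            filter_upwards [Ioo_mem_nhdsLT_of_mem (right_mem_Ioc.2 hlt)] with s hs
            have heq1 := eq1 (hmemIoo hs.1.le (le_trans hs.2.le ht₀mem.2)) ht₀Ioo hs.2.le
            rw [(hzero_lt s hs.1.le hs.2).1, zero_add] at heq1
            exact heq1.symm
          have hT2 : Tendsto (fun s => ∫ t in Ico s t₀, p t ∂ω) (𝓝[<] t₀) (𝓝 0) := by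
            obtain ⟨e, he, het⟩ := left_aux ht₀Ioo
            exact tendsto_Ico_left het (hdomp _ he _ ht₀Ioo)
          exact (tendsto_nhds_unique (Tendsto.congr' hev hT2) tendsto_const_nhds).symm
        · have hev : ∀ᶠ s in 𝓝[<] t₀, ∫ t in Ico s t₀, q t ∂ω = h1 t₀ := by
            filter_upwards [Ioo_mem_nhdsLT_of_mem (right_mem_Ioc.2 hlt)] with s hs
            have heq2 := eq2 (hmemIoo hs.1.le (le_trans hs.2.le ht₀mem.2)) ht₀Ioo hs.2.le
            rw [(hzero_lt s hs.1.le hs.2).2, zero_add] at heq2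
            exact heq2.symm
          have hT2 : Tendsto (fun s => ∫ t in Ico s t₀, q t ∂ω) (𝓝[<] t₀) (𝓝 0) := by
            obtain ⟨e, he, het⟩ := left_aux ht₀Ioo
            exact tendsto_Ico_left het (hdomq _ he _ ht₀Ioo)
          exact (tendsto_nhds_unique (Tendsto.congr' hev hT2) tendsto_const_nhds).symm
    have ht₀eq : t₀ = d := by
      by_contra hne
      have ht₀d : t₀ < d := lt_of_le_of_ne ht₀mem.2 hne
      have ht₀D : t₀ < D := lt_of_le_of_lt ht₀mem.2 hdD
      have hKt₀ : IntegrableOn K (Ico t₀ D) ω := hKint _ ht₀Ioo _ hD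
      have htendK : Tendsto (fun s => ∫ t in Ioo t₀ s, K t ∂ω) (𝓝[>] t₀) (𝓝 0) :=
        tendsto_Ioo_right ht₀D hKt₀
      have hev : ∀ᶠ s in 𝓝[>] t₀, ∫ t in Ioo t₀ s, K t ∂ω < 1/2 := by
        have := Metric.tendsto_nhds.1 htendK _ (by norm_num : (0:ℝ) < 1/2)
        refine this.mono (fun s hs => ?_)
        rw [dist_zero_right, Real.norm_eq_abs,
          abs_of_nonneg (setIntegral_nonneg measurableSet_Ioo (fun t _ => hKnonneg t))] at hs
        exact hs
      obtain ⟨s₁, hs₁, hs₁d⟩ := (hev.and (Ioo_mem_nhdsGT_of_mem (left_mem_Ico.2 ht₀d))).exists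
      set ε := ∫ t in Ioo t₀ s₁, K t ∂ω with hεdef
      have hεnn : 0 ≤ ε := setIntegral_nonneg measurableSet_Ioo (fun t _ => hKnonneg t)
      have hεlt : ε < 1/2 := hs₁
      have hIooInt : ∀ s, s ≤ s₁ → IntegrableOn G (Ioo t₀ s) ω := fun s hss₁ =>
        hGD.mono_set (fun r hr => ⟨le_trans ht₀mem.1 hr.1.le,
          lt_of_lt_of_le hr.2 (le_trans hss₁ (le_of_lt (lt_trans hs₁d.2 hdD)))⟩)
      have hKIooInt : ∀ s, s ≤ s₁ → IntegrableOn K (Ioo t₀ s) ω := fun s hss₁ =>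
        hKt₀.mono_set (fun r hr => ⟨hr.1.le,
          lt_of_lt_of_le hr.2 (le_trans hss₁ (le_of_lt (lt_trans hs₁d.2 hdD)))⟩)
      have hbase : ∀ s, t₀ < s → s ≤ s₁ → ‖h s‖ + ‖h1 s‖ ≤ ∫ t in Ioo t₀ s, G t ∂ω := by
        intro s hts hss₁
        have hsIoo : s ∈ Ioo a b := hmemIoo (le_trans ht₀mem.1 hts.le)
          (le_trans hss₁ hs₁d.2.le)
        have hIcoIoo : ∀ (f : ℝ → ℂ), IntegrableOn f (Ico t₀ s) ω → f t₀ = 0 →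
            ∫ t in Ico t₀ s, f t ∂ω = ∫ t in Ioo t₀ s, f t ∂ω := by
          intro f hf hf0
          have hunion : Ico t₀ s = Ioo t₀ s ∪ {t₀} := by
            rw [Ioo_union_left hts]
          rw [hunion, setIntegral_union (by simp) (measurableSet_singleton t₀)
            (hf.mono_set (by rw [hunion]; exact subset_union_left))
            (hf.mono_set (by rw [hunion]; exact subset_union_right)),
            integral_singleton, hf0, smul_zero, add_zero]
        have hpInt : IntegrableOn p (Ico t₀ s) ω := hdomp _ ht₀Ioo _ hsIoo
        have hqInt : IntegrableOn q (Ico t₀ s) ω := hdomq _ ht₀Ioo _ hsIoo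
        have e1 := eq1 ht₀Ioo hsIoo hts.le
        have e2 := eq2 ht₀Ioo hsIoo hts.le
        rw [ht₀zero.1, zero_add, hIcoIoo p hpInt (by simp [hp, ht₀zero.2])] at e1
        rw [ht₀zero.2, zero_add, hIcoIoo q hqInt (by simp [hq, ht₀zero.1])] at e2
        have hb1 : ‖h s‖ ≤ ∫ t in Ioo t₀ s, ‖p t‖ ∂ω := by
          rw [e1]; exact norm_integral_le_integral_norm _
        have hb2 : ‖h1 s‖ ≤ ∫ t in Ioo t₀ s, ‖q t‖ ∂ω := by
          rw [e2]; exact norm_integral_le_integral_norm _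
        have hpIoo : IntegrableOn (fun t => ‖p t‖) (Ioo t₀ s) ω :=
          (hpInt.mono_set Ioo_subset_Ico_self).norm
        have hqIoo : IntegrableOn (fun t => ‖q t‖) (Ioo t₀ s) ω :=
          (hqInt.mono_set Ioo_subset_Ico_self).norm
        have : (∫ t in Ioo t₀ s, ‖p t‖ ∂ω) + (∫ t in Ioo t₀ s, ‖q t‖ ∂ω)
            = ∫ t in Ioo t₀ s, G t ∂ω := by
          rw [← integral_add hpIoo hqIoo]
        linarith [hb1, hb2]
      have hMbound : ∀ s, t₀ < s → s ≤ s₁ → ∫ t in Ioo t₀ s, G t ∂ω ≤ M := by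
        intro s hts hss₁
        refine setIntegral_mono_set hGD (ae_of_all _ (fun t => hGnonneg t)) ?_
        refine HasSubset.Subset.eventuallyLE (fun r hr => ?_)
        exact ⟨le_trans ht₀mem.1 hr.1.le,
          lt_of_lt_of_le hr.2 (le_trans hss₁ (le_of_lt (lt_trans hs₁d.2 hdD)))⟩
      have hiter : ∀ n : ℕ, ∀ s, t₀ < s → s ≤ s₁ → ‖h s‖ + ‖h1 s‖ ≤ M * ε^n := by
        intro n
        induction n with
        | zero => intro s hts hss₁; simpa using le_trans (hbase s hts hss₁) (hMbound s hts hss₁)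
        | succ n ih =>
          intro s hts hss₁
          refine le_trans (hbase s hts hss₁) ?_
          have hmono : ∫ t in Ioo t₀ s, G t ∂ω ≤ ∫ t in Ioo t₀ s, K t * (M * ε^n) ∂ω := by
            refine setIntegral_mono_on (hIooInt s hss₁) ((hKIooInt s hss₁).mul_const _)
              measurableSet_Ioo (fun r hr => ?_)
            exact hGle r _ (ih r hr.1 (le_trans hr.2.le hss₁))
          refine le_trans hmono ?_
          rw [integral_mul_const]
          have hKle : ∫ t in Ioo t₀ s, K t ∂ω ≤ ε := by
            refine setIntegral_mono_set (hKIooInt s₁ le_rfl)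
              (ae_of_all _ (fun t => hKnonneg t)) ?_
            exact HasSubset.Subset.eventuallyLE (fun r hr => ⟨hr.1, lt_of_lt_of_le hr.2 hss₁⟩)
          calc (∫ t in Ioo t₀ s, K t ∂ω) * (M * ε^n) ≤ ε * (M * ε^n) :=
                mul_le_mul_of_nonneg_right hKle (by positivity)
            _ = M * ε^(n+1) := by ring
      have hzero2 : ∀ s, t₀ < s → s ≤ s₁ → h s = 0 ∧ h1 s = 0 := by
        intro s hts hss₁
        have htendn : Tendsto (fun n : ℕ => M * ε^n) atTop (𝓝 0) := by
          rw [show (0:ℝ) = M * 0 from (mul_zero M).symm]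
          exact (tendsto_pow_atTop_nhds_zero_of_lt_one hεnn (by linarith)).const_mul M
        have hle0 : ‖h s‖ + ‖h1 s‖ ≤ 0 :=
          ge_of_tendsto htendn (Eventually.of_forall (fun n => hiter n s hts hss₁))
        constructor
        · exact norm_eq_zero.1 (le_antisymm (by linarith [norm_nonneg (h1 s)]) (norm_nonneg _))
        · exact norm_eq_zero.1 (le_antisymm (by linarith [norm_nonneg (h s)]) (norm_nonneg _))
      have hs₁T : s₁ ∈ T := by
        refine ⟨⟨le_trans ht₀mem.1 hs₁d.1.le, hs₁d.2.le⟩, fun s hs => ?_⟩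
        rcases le_or_gt s t₀ with hle | hlt
        · rcases eq_or_lt_of_le hle with heqs | hlt2
          · rw [heqs]; exact ht₀zero
          · exact hzero_lt s hs.1 hlt2
        · exact hzero2 s hlt hs.2
      exact absurd (le_csSup hTbdd hs₁T) (not_le.2 hs₁d.1)
    intro s hs
    rcases eq_or_lt_of_le hs.2 with heqs | hlts
    · have hz0 := ht₀zero
      rw [ht₀eq] at hz0
      rw [heqs]; exact hz0
    · exact hzero_lt s hs.1 (by rw [ht₀eq]; exact hlts)
  -- backward uniqueness
  have bwd : ∀ c₀, c₀ ∈ Ioo a b → h c₀ = 0 → h1 c₀ = 0 → ∀ e, e ∈ Ioo a b → e ≤ c₀ →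
      ∀ s ∈ Icc e c₀, h s = 0 ∧ h1 s = 0 := by
    intro c₀ hc₀m h0 h10 e hem hec
    obtain ⟨E, hE, hEe⟩ := left_aux hem
    have hGE : IntegrableOn G (Ico E c₀) ω := hGint _ hE _ hc₀m
    have hKE : IntegrableOn K (Ico E c₀) ω := hKint _ hE _ hc₀m
    set M : ℝ := ∫ t in Ico E c₀, G t ∂ω with hM
    have hMnonneg : 0 ≤ M := setIntegral_nonneg measurableSet_Ico (fun t _ => hGnonneg t)
    set T : Set ℝ := {t | t ∈ Icc e c₀ ∧ ∀ s ∈ Icc t c₀, h s = 0 ∧ h1 s = 0} with hT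
    have hc₀T : c₀ ∈ T := ⟨⟨hec, le_rfl⟩, fun s hs => by
      have hsc : s = c₀ := le_antisymm hs.2 hs.1
      rw [hsc]; exact ⟨h0, h10⟩⟩
    have hTne : T.Nonempty := ⟨c₀, hc₀T⟩
    have hTbdd : BddBelow T := ⟨e, fun t ht => ht.1.1⟩
    set t₀ := sInf T with ht₀
    have ht₀mem : t₀ ∈ Icc e c₀ := ⟨le_csInf hTne (fun t ht => ht.1.1), csInf_le hTbdd hc₀T⟩
    have hmemIoo : ∀ {s : ℝ}, e ≤ s → s ≤ c₀ → s ∈ Ioo a b := fun hs hs' =>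
      ⟨lt_of_lt_of_le hem.1 hs, lt_of_le_of_lt hs' hc₀m.2⟩
    have ht₀Ioo : t₀ ∈ Ioo a b := hmemIoo ht₀mem.1 ht₀mem.2
    have hzero_gt : ∀ s, t₀ < s → s ≤ c₀ → h s = 0 ∧ h1 s = 0 := by
      intro s hst hsc
      obtain ⟨t, htT, hts⟩ := exists_lt_of_csInf_lt hTne hst
      exact htT.2 s ⟨hts.le, hsc⟩
    have ht₀zero : h t₀ = 0 ∧ h1 t₀ = 0 := by
      rcases eq_or_lt_of_le ht₀mem.2 with heqc | hlt
      · rw [heqc]; exact ⟨h0, h10⟩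
      · have hjp : h t₀ + ∫ t in {t₀}, p t ∂ω = 0 := by
          have hev : ∀ᶠ s in 𝓝[>] t₀, h t₀ + ∫ t in Ico t₀ s, p t ∂ω = 0 := by
            filter_upwards [Ioo_mem_nhdsGT_of_mem (left_mem_Ico.2 hlt)] with s hs
            have heq1 := eq1 ht₀Ioo (hmemIoo (le_trans ht₀mem.1 hs.1.le) hs.2.le) hs.1.le
            rw [(hzero_gt s hs.1 hs.2.le).1] at heq1
            exact heq1.symm
          have hT2 : Tendsto (fun s => h t₀ + ∫ t in Ico t₀ s, p t ∂ω) (𝓝[>] t₀)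
              (𝓝 (h t₀ + ∫ t in {t₀}, p t ∂ω)) := tendsto_const_nhds.add (rightlimp ht₀Ioo)
          exact tendsto_nhds_unique (Tendsto.congr' hev hT2) tendsto_const_nhds
        have hjq : h1 t₀ + ∫ t in {t₀}, q t ∂ω = 0 := by
          have hev : ∀ᶠ s in 𝓝[>] t₀, h1 t₀ + ∫ t in Ico t₀ s, q t ∂ω = 0 := by
            filter_upwards [Ioo_mem_nhdsGT_of_mem (left_mem_Ico.2 hlt)] with s hs
            have heq2 := eq2 ht₀Ioo (hmemIoo (le_trans ht₀mem.1 hs.1.le) hs.2.le) hs.1.le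
            rw [(hzero_gt s hs.1 hs.2.le).2] at heq2
            exact heq2.symm
          have hT2 : Tendsto (fun s => h1 t₀ + ∫ t in Ico t₀ s, q t ∂ω) (𝓝[>] t₀)
              (𝓝 (h1 t₀ + ∫ t in {t₀}, q t ∂ω)) := tendsto_const_nhds.add (rightlimq ht₀Ioo)
          exact tendsto_nhds_unique (Tendsto.congr' hev hT2) tendsto_const_nhds
        rw [integral_singleton, measureReal_def] at hjp hjq
        set m : ℝ := (ω {t₀}).toReal with hm
        rw [Complex.real_smul] at hjp hjq
        have hκ := (hatoms t₀ ht₀Ioo).2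
        have e1' : h t₀ = -((m:ℂ) * (h1 t₀ * σf t₀)) := by
          have : p t₀ = h1 t₀ * σf t₀ := rfl
          rw [this] at hjp
          linear_combination hjp
        have e2' : h1 t₀ = -((m:ℂ) * (h t₀ * χf t₀)) := by
          have : q t₀ = h t₀ * χf t₀ := rfl
          rw [this] at hjq
          linear_combination hjq
        have e3 := e1'
        rw [e2'] at e3
        have hfix : h t₀ = ((m:ℂ) * σf t₀ * ((m:ℂ) * χf t₀)) * h t₀ := by
          linear_combination e3
        rw [hκ, zero_mul] at hfix
        refine ⟨hfix, ?_⟩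
        rw [hfix] at e2'
        rw [e2']; ring
    have ht₀eq : t₀ = e := by
      by_contra hne
      have het₀ : e < t₀ := lt_of_le_of_ne ht₀mem.1 (Ne.symm hne)
      have hEt₀ : E < t₀ := lt_trans hEe het₀
      have hKE2 : IntegrableOn K (Ico E t₀) ω := hKE.mono_set (Ico_subset_Ico le_rfl ht₀mem.2)
      have htendK : Tendsto (fun s => ∫ t in Ico s t₀, K t ∂ω) (𝓝[<] t₀) (𝓝 0) :=
        tendsto_Ico_left hEt₀ hKE2
      have hev : ∀ᶠ s in 𝓝[<] t₀, ∫ t in Ico s t₀, K t ∂ω < 1/2 := by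
        have := Metric.tendsto_nhds.1 htendK _ (by norm_num : (0:ℝ) < 1/2)
        refine this.mono (fun s hs => ?_)
        rw [dist_zero_right, Real.norm_eq_abs,
          abs_of_nonneg (setIntegral_nonneg measurableSet_Ico (fun t _ => hKnonneg t))] at hs
        exact hs
      obtain ⟨s₁, hs₁, hs₁d⟩ := (hev.and (Ioo_mem_nhdsLT_of_mem (right_mem_Ioc.2 het₀))).exists
      set ε := ∫ t in Ico s₁ t₀, K t ∂ω with hεdef
      have hεnn : 0 ≤ ε := setIntegral_nonneg measurableSet_Ico (fun t _ => hKnonneg t)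
      have hεlt : ε < 1/2 := hs₁
      have hmemS : ∀ {s : ℝ}, s₁ ≤ s → s < t₀ → s ∈ Ioo a b := fun hss hst =>
        ⟨lt_trans hem.1 (lt_of_lt_of_le hs₁d.1 hss),
          lt_of_lt_of_le hst (le_trans ht₀mem.2 hc₀m.2.le)⟩
      have hsubE : ∀ {s : ℝ}, s₁ ≤ s → Ico s t₀ ⊆ Ico E c₀ := fun hss r hr =>
        ⟨le_trans (le_of_lt (lt_trans hEe (lt_of_lt_of_le hs₁d.1 hss))) hr.1,
          lt_of_lt_of_le hr.2 ht₀mem.2⟩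
      have hbase : ∀ s, s₁ ≤ s → s < t₀ → ‖h s‖ + ‖h1 s‖ ≤ ∫ t in Ico s t₀, G t ∂ω := by
        intro s hss hst
        have hsIoo : s ∈ Ioo a b := hmemS hss hst
        have hpInt : IntegrableOn p (Ico s t₀) ω := hdomp _ hsIoo _ ht₀Ioo
        have hqInt : IntegrableOn q (Ico s t₀) ω := hdomq _ hsIoo _ ht₀Ioo
        have e1 := eq1 hsIoo ht₀Ioo hst.le
        have e2 := eq2 hsIoo ht₀Ioo hst.le
        rw [ht₀zero.1] at e1
        rw [ht₀zero.2] at e2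
        have hb1 : ‖h s‖ ≤ ∫ t in Ico s t₀, ‖p t‖ ∂ω := by
          have hv : h s = -∫ t in Ico s t₀, p t ∂ω := by linear_combination -e1
          rw [hv, norm_neg]; exact norm_integral_le_integral_norm _
        have hb2 : ‖h1 s‖ ≤ ∫ t in Ico s t₀, ‖q t‖ ∂ω := by
          have hv : h1 s = -∫ t in Ico s t₀, q t ∂ω := by linear_combination -e2
          rw [hv, norm_neg]; exact norm_integral_le_integral_norm _
        have hsum : (∫ t in Ico s t₀, ‖p t‖ ∂ω) + (∫ t in Ico s t₀, ‖q t‖ ∂ω)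
            = ∫ t in Ico s t₀, G t ∂ω := by
          rw [← integral_add hpInt.norm hqInt.norm]
        linarith [hb1, hb2]
      have hiter : ∀ n : ℕ, ∀ s, s₁ ≤ s → s < t₀ → ‖h s‖ + ‖h1 s‖ ≤ M * ε^n := by
        intro n
        induction n with
        | zero =>
          intro s hss hst
          have : ∫ t in Ico s t₀, G t ∂ω ≤ M := by
            refine setIntegral_mono_set hGE (ae_of_all _ (fun t => hGnonneg t)) ?_
            exact HasSubset.Subset.eventuallyLE (hsubE hss)
          simpa using le_trans (hbase s hss hst) this
        | succ n ih =>
          intro s hss hst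
          refine le_trans (hbase s hss hst) ?_
          have hGI : IntegrableOn G (Ico s t₀) ω := hGE.mono_set (hsubE hss)
          have hKI : IntegrableOn K (Ico s t₀) ω := hKE.mono_set (hsubE hss)
          have hmono : ∫ t in Ico s t₀, G t ∂ω ≤ ∫ t in Ico s t₀, K t * (M * ε^n) ∂ω := by
            refine setIntegral_mono_on hGI (hKI.mul_const _) measurableSet_Ico (fun r hr => ?_)
            exact hGle r _ (ih r (le_trans hss hr.1) hr.2)
          refine le_trans hmono ?_
          rw [integral_mul_const]
          have hKle : ∫ t in Ico s t₀, K t ∂ω ≤ ε := by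
            refine setIntegral_mono_set (hKE.mono_set (hsubE le_rfl))
              (ae_of_all _ (fun t => hKnonneg t)) ?_
            exact HasSubset.Subset.eventuallyLE (Ico_subset_Ico hss le_rfl)
          calc (∫ t in Ico s t₀, K t ∂ω) * (M * ε^n) ≤ ε * (M * ε^n) :=
                mul_le_mul_of_nonneg_right hKle (by positivity)
            _ = M * ε^(n+1) := by ring
      have hzero2 : ∀ s, s₁ ≤ s → s < t₀ → h s = 0 ∧ h1 s = 0 := by
        intro s hss hst
        have htendn : Tendsto (fun n : ℕ => M * ε^n) atTop (𝓝 0) := by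
          rw [show (0:ℝ) = M * 0 from (mul_zero M).symm]
          exact (tendsto_pow_atTop_nhds_zero_of_lt_one hεnn (by linarith)).const_mul M
        have hle0 : ‖h s‖ + ‖h1 s‖ ≤ 0 :=
          ge_of_tendsto htendn (Eventually.of_forall (fun n => hiter n s hss hst))
        constructor
        · exact norm_eq_zero.1 (le_antisymm (by linarith [norm_nonneg (h1 s)]) (norm_nonneg _))
        · exact norm_eq_zero.1 (le_antisymm (by linarith [norm_nonneg (h s)]) (norm_nonneg _))
      have hs₁T : s₁ ∈ T := by
        refine ⟨⟨hs₁d.1.le, le_trans hs₁d.2.le ht₀mem.2⟩, fun s hs => ?_⟩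
        rcases lt_or_ge s t₀ with hlt2 | hge
        · exact hzero2 s hs.1 hlt2
        · rcases eq_or_lt_of_le hge with heqs | hlt3
          · rw [← heqs]; exact ht₀zero
          · exact hzero_gt s hlt3 hs.2
      exact absurd (csInf_le hTbdd hs₁T) (not_le.2 hs₁d.2)
    intro s hs
    rcases eq_or_lt_of_le hs.1 with heqs | hlts
    · have hz0 := ht₀zero
      rw [ht₀eq] at hz0
      rw [← heqs]; exact hz0
    · refine hzero_gt s ?_ hs.2
      rw [ht₀eq]; exact hlts
  -- main assembly
  have main2 : ∀ x y : ℝ, x ∈ Ioo a b → y ∈ Ioo a b → x < y →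
      InSuppRho a b ω ρf x → InSuppRho a b ω ρf y → ∃ c ∈ Ioo a b, h c = 0 ∧ h1 c = 0 := by
    intro x y hx hy hxy hsx hsy
    by_cases hB : ∃ s t : ℝ, x ≤ s ∧ s < t ∧ t ≤ y ∧ (∀ᵐ r ∂ω, r ∈ Ioo s t → ρf r = 0)
    · obtain ⟨s, t, hxs, hst, hty, hfree⟩ := hB
      set A : Set ℝ := {s' | x ≤ s' ∧ s' ≤ s ∧ (∀ᵐ r ∂ω, r ∈ Ioo s' t → ρf r = 0)} with hA
      have hsA : s ∈ A := ⟨hxs, le_rfl, hfree⟩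
      have hAne : A.Nonempty := ⟨s, hsA⟩
      have hAbdd : BddBelow A := ⟨x, fun r hr => hr.1⟩
      set α : ℝ := sInf A with hαdef
      have hαx : x ≤ α := le_csInf hAne (fun r hr => hr.1)
      have hαs : α ≤ s := csInf_le hAbdd hsA
      have hαfree : ∀ᵐ r ∂ω, r ∈ Ioo α t → ρf r = 0 := by
        have happ : ∀ n : ℕ, ∃ s' ∈ A, s' < α + 1/(n+1) := by
          intro n
          apply exists_lt_of_csInf_lt hAne
          have hpos : (0:ℝ) < 1/(n+1) := by positivity
          linarith
        choose sn hsnA hsnlt using happ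
        have hallae : ∀ᵐ r ∂ω, ∀ n : ℕ, r ∈ Ioo (sn n) t → ρf r = 0 := by
          rw [ae_all_iff]
          exact fun n => (hsnA n).2.2
        filter_upwards [hallae] with r hr hrI
        obtain ⟨n, hn⟩ := exists_nat_one_div_lt (show (0:ℝ) < r - α from by linarith [hrI.1])
        exact hr n ⟨by linarith [hsnlt n], hrI.2⟩
      have hαsupp : InSuppRho a b ω ρf α := by
        rcases eq_or_lt_of_le hαx with heqx | hxlt
        · rw [← heqx]; exact hsx
        · intro ε hε hcon
          have hlt1 : max x (α - ε) < α := max_lt hxlt (by linarith)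
          have hmax : max x (α - ε) ∈ A := by
            refine ⟨le_max_left _ _, le_trans hlt1.le hαs, ?_⟩
            filter_upwards [hαfree, hcon] with r h1r h2r hrI
            rcases le_or_gt r α with hle | hgt
            · refine h2r ⟨⟨lt_of_le_of_lt (le_max_right _ _) hrI.1, by linarith⟩, ?_⟩
              exact ⟨lt_of_lt_of_le hx.1 (le_trans (le_max_left _ _) hrI.1.le),
                lt_of_lt_of_le hrI.2 (le_trans hty hy.2.le)⟩
            · exact h1r ⟨hgt, hrI.2⟩
          exact absurd (csInf_le hAbdd hmax) (not_le.2 hlt1)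
      set B2 : Set ℝ := {t' | t ≤ t' ∧ t' ≤ y ∧ (∀ᵐ r ∂ω, r ∈ Ioo α t' → ρf r = 0)} with hB2
      have hαt : ∀ᵐ r ∂ω, r ∈ Ioo α t → ρf r = 0 := hαfree
      have htB : t ∈ B2 := ⟨le_rfl, hty, hαt⟩
      have hBne : B2.Nonempty := ⟨t, htB⟩
      have hBbdd : BddAbove B2 := ⟨y, fun r hr => hr.2.1⟩
      set β : ℝ := sSup B2 with hβdef
      have hβy : β ≤ y := csSup_le hBne (fun r hr => hr.2.1)
      have htβ : t ≤ β := le_csSup hBbdd htB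
      have hβfree : ∀ᵐ r ∂ω, r ∈ Ioo α β → ρf r = 0 := by
        have happ : ∀ n : ℕ, ∃ t' ∈ B2, β - 1/(n+1) < t' := by
          intro n
          apply exists_lt_of_lt_csSup hBne
          have hpos : (0:ℝ) < 1/(n+1) := by positivity
          linarith
        choose tn htnB htnlt using happ
        have hallae : ∀ᵐ r ∂ω, ∀ n : ℕ, r ∈ Ioo α (tn n) → ρf r = 0 := by
          rw [ae_all_iff]
          exact fun n => (htnB n).2.2
        filter_upwards [hallae] with r hr hrI
        obtain ⟨n, hn⟩ := exists_nat_one_div_lt (show (0:ℝ) < β - r from by linarith [hrI.2])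
        exact hr n ⟨hrI.1, by linarith [htnlt n]⟩
      have hβsupp : InSuppRho a b ω ρf β := by
        rcases eq_or_lt_of_le hβy with heqy | hylt
        · rw [heqy]; exact hsy
        · intro ε hε hcon
          have hlt1 : β < min y (β + ε) := lt_min hylt (by linarith)
          have hmin : min y (β + ε) ∈ B2 := by
            refine ⟨le_trans htβ hlt1.le, min_le_left _ _, ?_⟩
            filter_upwards [hβfree, hcon] with r h1r h2r hrI
            rcases lt_or_ge r β with hlt2 | hge
            · exact h1r ⟨hrI.1, hlt2⟩
            · refine h2r ⟨⟨by linarith, lt_of_lt_of_le hrI.2 (min_le_right _ _)⟩, ?_⟩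
              exact ⟨lt_of_lt_of_le hx.1 (le_trans hαx hrI.1.le),
                lt_of_lt_of_le (lt_of_lt_of_le hrI.2 (min_le_left _ _)) hy.2.le⟩
          exact absurd (le_csSup hBbdd hmin) (not_le.2 hlt1)
      have hαIoo : α ∈ Ioo a b :=
        ⟨lt_of_lt_of_le hx.1 hαx, lt_of_le_of_lt (le_trans hαs (le_trans hst.le hty)) hy.2⟩
      have hβIoo : β ∈ Ioo a b :=
        ⟨lt_of_lt_of_le hx.1 (le_trans hxs (le_trans hst.le htβ)), lt_of_le_of_lt hβy hy.2⟩
      have hαβ : α < β := lt_of_le_of_lt hαs (lt_of_lt_of_le hst htβ)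
      have hz := gap_zero hαIoo hβIoo hαβ hβfree hαsupp hβsupp
      exact seed_from_interval hαIoo hβIoo hαβ hz
    · push_neg at hB
      have hzv : ∀ z ∈ Ioo x y, h z = 0 := by
        intro z hz
        by_contra hne
        have hδ : 0 < ‖h z‖ := norm_pos_iff.2 hne
        have hzIoo : z ∈ Ioo a b := ⟨lt_trans hx.1 hz.1, lt_trans hz.2 hy.2⟩
        have hev2 : ∀ᶠ s in 𝓝[<] z, ‖∫ t in Ico s z, p t ∂ω‖ < ‖h z‖ := by
          have := Metric.tendsto_nhds.1 (leftlimp hzIoo) _ hδ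
          exact this.mono (fun s hs => by rwa [dist_zero_right] at hs)
        rw [eventually_nhdsWithin_iff] at hev2
        obtain ⟨ε₀, hε₀pos, hball⟩ := Metric.eventually_nhds_iff.1 hev2
        set w : ℝ := max x (z - ε₀/2) with hwdef
        have hwz : w < z := max_lt hz.1 (by linarith)
        have hmassless := hB w z (le_max_left _ _) hwz hz.2.le
        have hWsub : Ioo w z ⊆ Ioo a b := fun r hr =>
          ⟨lt_trans hx.1 (lt_of_le_of_lt (le_max_left _ _) hr.1),
            lt_trans (lt_trans hr.2 hz.2) hy.2⟩
        obtain ⟨r, hrI, hhr⟩ := exists_good (Ioo w z) hWsub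
          (Filter.not_eventually.2 (hmassless.mono fun t ht hc => ht.2 (hc ht.1)))
        have hrab : r ∈ Ioo a b := hWsub hrI
        have hdist : dist r z < ε₀ := by
          rw [Real.dist_eq, abs_of_nonpos (by linarith [hrI.2])]
          have hwlb : z - ε₀/2 ≤ w := le_max_right _ _
          linarith [hrI.1]
        have hP := hball hdist hrI.2
        have heq' := eq1 hrab hzIoo hrI.2.le
        rw [hhr, zero_add] at heq'
        rw [← heq'] at hP
        exact lt_irrefl _ hP
      exact seed_from_interval hx hy hxy hzv
  obtain ⟨x0, hx0, y0, hy0, hxy0, hsx0, hsy0⟩ := htwo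
  have seed : ∃ c ∈ Ioo a b, h c = 0 ∧ h1 c = 0 := by
    rcases lt_or_gt_of_ne hxy0 with hlt | hgt
    · exact main2 x0 y0 hx0 hy0 hlt hsx0 hsy0
    · exact main2 y0 x0 hy0 hx0 hgt hsy0 hsx0
  obtain ⟨c, hcm, hc0, hc10⟩ := seed
  intro z hz
  rcases le_or_gt z c with hle | hgt
  · exact (bwd c hcm hc0 hc10 z hz hle z ⟨le_rfl, hle⟩).1
  · exact (fwd c hcm hc0 hc10 z hz hgt.le z ⟨hgt.le, le_rfl⟩).1







theorem stmt10 (a b : ℝ) (hab : a < b) (ω : Measure ℝ) (σf χf ρf : ℝ → ℂ)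
    (hσ : LocInt a b ω σf) (hχ : LocInt a b ω χf) (hρ : LocInt a b ω ρf)
    (hreal : RealCoeffs σf χf ρf)
    (hsupp : SuppFull a b ω σf)
    (hatoms : NoCommonAtoms a b ω σf χf ρf)
    (hgapcond : GapCondition a b ω σf χf ρf)
    (htwo : SuppRhoTwoPoints a b ω ρf)
    (f f1 fτ g g1 gτ : ℝ → ℂ)
    (hf : InDom a b ω σf χf ρf f f1 fτ)
    (hg : InDom a b ω σf χf ρf g g1 gτ)
    (hfg : ∀ᵐ t ∂ω, t ∈ Set.Ioo a b → (ρf t = 0 ∨ f t = g t))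
    (hfgτ : ∀ᵐ t ∂ω, t ∈ Set.Ioo a b → (ρf t = 0 ∨ fτ t = gτ t)) :
    ∀ x ∈ Set.Ioo a b, f x = g x := by
  intro x hx
  set h : ℝ → ℂ := fun t => f t - g t with hh
  set h1 : ℝ → ℂ := fun t => f1 t - g1 t with hh1
  have hzero : ∀ x ∈ Set.Ioo a b, h x = 0 := by
    apply master a b hab ω σf χf ρf hσ hχ hreal.1 hsupp hatoms hgapcond htwo h h1
    · -- InDom for (h, h1, 0)
      obtain ⟨hf1, hf2, hf3⟩ := hf
      obtain ⟨hg1, hg2, hg3⟩ := hg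
      refine ⟨?_, ?_, ?_⟩
      · intro α hα β hβ
        have hb := (hf1 α hα β hβ).sub (hg1 α hα β hβ)
        refine hb.congr (ae_of_all _ (fun t => by simp only [hh1, Pi.sub_apply]; ring))
      · intro α hα β hβ
        have hIoo : Set.Ico α β ⊆ Set.Ioo a b := fun t ht =>
          ⟨lt_of_lt_of_le hα.1 ht.1, lt_trans ht.2 hβ.2⟩
        have hbase := (hf2 α hα β hβ).sub (hg2 α hα β hβ)
        refine hbase.congr ?_
        filter_upwards [ae_restrict_of_ae hfgτ, ae_restrict_mem measurableSet_Ico]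
          with t ht htm
        rcases ht (hIoo htm) with h3 | h3 <;>
          · simp only [Pi.sub_apply, hh, hh1, h3]; ring
      · intro α hα β hβ hle
        obtain ⟨e1f, e2f⟩ := hf3 α hα β hβ hle
        obtain ⟨e1g, e2g⟩ := hg3 α hα β hβ hle
        have hint1f := hf1 α hα β hβ
        have hint1g := hg1 α hα β hβ
        have hint2f := hf2 α hα β hβ
        have hint2g := hg2 α hα β hβ
        have hIoo : Set.Ico α β ⊆ Set.Ioo a b := fun t ht =>
          ⟨lt_of_lt_of_le hα.1 ht.1, lt_trans ht.2 hβ.2⟩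
        constructor
        · have hI : ∫ t in Set.Ico α β, h1 t * σf t ∂ω
              = (∫ t in Set.Ico α β, f1 t * σf t ∂ω) - ∫ t in Set.Ico α β, g1 t * σf t ∂ω := by
            rw [← integral_sub hint1f hint1g]
            exact integral_congr_ae (ae_of_all _ (fun t => by simp only [hh1]; ring))
          rw [hI]
          simp only [hh]
          rw [e1f, e1g]
          ring
        · have hI : ∫ t in Set.Ico α β, (h t * χf t - (fun _ => (0:ℂ)) t * ρf t) ∂ω
              = (∫ t in Set.Ico α β, (f t * χf t - fτ t * ρf t) ∂ω)
                - ∫ t in Set.Ico α β, (g t * χf t - gτ t * ρf t) ∂ω := by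
            rw [← integral_sub hint2f hint2g]
            refine integral_congr_ae ?_
            filter_upwards [ae_restrict_of_ae hfgτ, ae_restrict_mem measurableSet_Ico]
              with t ht htm
            rcases ht (hIoo htm) with h3 | h3 <;>
              · simp only [hh, hh1, h3]; ring
          rw [hI]
          simp only [hh1]
          rw [e2f, e2g]
          ring
    · exact hfg.mono (fun t ht htIoo => (ht htIoo).imp id (fun he => by simp [hh, he, sub_eq_zero]))
  have := hzero x hx
  rw [hh] at this
  simpa [sub_eq_zero] using this
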